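/- Suppose (X,d) is an unbounded, doubling, complete ultrametric space. Then there exist k ∈ ℕ, 0 < λ < 1, a base point o ∈ F^∞, and a bilipschitz embedding of (X,d) into (F^∞ \ {o}, σ_λ), where σ_λ(x,y) = λ^{L(x,y) − L(x,o) − L(y,o)}. -/

import Mathlib

open Classical

/-- `agree x y` is the number of initial coordinates on which the sequences
`x, y : ℕ → F` agree (`0` by convention when `x = y`). -/
noncomputable def agree {F : Type*} (x y : ℕ → F) : ℕ :=
  if h : x = y then 0 else Nat.find (Function.ne_iff.mp h)

/-- `σ_λ(x,y) = λ^{L(x,y) - L(x,o) - L(y,o)}`, with `σ_λ(x,x) = 0`. -/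
noncomputable def sigma {F : Type*} (lam : ℝ) (o x y : ℕ → F) : ℝ :=
  if x = y then 0
  else lam ^ ((agree x y : ℤ) - (agree x o : ℤ) - (agree y o : ℤ))

section Aux

lemma agree_eq_of {F : Type*} {u v : ℕ → F} {n : ℕ}
    (h1 : ∀ j < n, u j = v j) (h2 : u n ≠ v n) : agree u v = n := by
  have hne : u ≠ v := fun h => h2 (congrFun h n)
  rw [agree, dif_neg hne]
  exact (Nat.find_eq_iff _).mpr ⟨h2, fun m hm => not_not_intro (h1 m hm)⟩

lemma agree_comm {F : Type*} (u v : ℕ → F) : agree u v = agree v u := by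
  unfold agree
  by_cases h : u = v
  · subst h; rfl
  · rw [dif_neg h, dif_neg (Ne.symm h)]
    apply le_antisymm
    · exact Nat.find_min' _ (Ne.symm (Nat.find_spec (Function.ne_iff.mp (Ne.symm h))))
    · exact Nat.find_min' _ (Ne.symm (Nat.find_spec (Function.ne_iff.mp h)))

lemma sigma_comm {F : Type*} (lam : ℝ) (o u v : ℕ → F) :
    sigma lam o u v = sigma lam o v u := by
  unfold sigma
  by_cases h : u = v
  · subst h; rfl
  · rw [if_neg h, if_neg (Ne.symm h), agree_comm u v]
    congr 1
    omega

noncomputable def rr (n : ℤ) : ℝ := (2:ℝ) ^ (-n)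

lemma rr_pos (n : ℤ) : 0 < rr n := zpow_pos (by norm_num) _

lemma rr_anti {n m : ℤ} (h : n ≤ m) : rr m ≤ rr n :=
  zpow_le_zpow_right₀ one_le_two (by omega)

lemma rr_half (n : ℤ) : rr (n-1) / 2 = rr n := by
  rw [rr, rr, show -(n-1) = -n + 1 by ring, zpow_add₀ (by norm_num : (2:ℝ) ≠ 0), zpow_one]
  ring

lemma rr_eq (n : ℤ) : rr (-n) = (2:ℝ) ^ n := by rw [rr, neg_neg]

variable {X : Type*} [MetricSpace X]

def csetoid (hu : ∀ x y z : X, dist x y ≤ max (dist x z) (dist z y)) (n : ℤ) : Setoid X where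
  r x y := dist x y < rr n
  iseqv := ⟨fun x => by simpa using rr_pos n,
    fun {x y} h => by rwa [dist_comm] at h,
    fun {x y z} h1 h2 => lt_of_le_of_lt (hu x z y) (max_lt h1 h2)⟩

variable (hu : ∀ x y z : X, dist x y ≤ max (dist x z) (dist z y))
variable (N : ℕ) (hN : ∀ (x : X) (r : ℝ), ∃ s : Finset X, s.card ≤ N ∧
      Metric.ball x r ⊆ ⋃ c ∈ s, Metric.ball c (r / 2))

noncomputable def cov (z : X) (r : ℝ) : Finset X := (hN z r).choose

lemma cov_card (z : X) (r : ℝ) : (cov N hN z r).card ≤ N := (hN z r).choose_spec.1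

lemma cov_sub (z : X) (r : ℝ) :
    Metric.ball z r ⊆ ⋃ c ∈ cov N hN z r, Metric.ball c (r / 2) := (hN z r).choose_spec.2

noncomputable def prep (n : ℤ) (x : X) : X := (Quotient.mk (csetoid hu (n-1)) x).out

lemma prep_dist (n : ℤ) (x : X) : dist x (prep hu n x) < rr (n-1) := by
  have h := Quotient.exact (Quotient.out_eq (Quotient.mk (csetoid hu (n-1)) x))
  rw [dist_comm]
  exact h

lemma prep_congr (n : ℤ) {x y : X} (h : dist x y < rr (n-1)) :
    prep hu n x = prep hu n y := by
  unfold prep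
  rw [Quotient.sound (h : (csetoid hu (n-1)).r x y)]

noncomputable def Tlist (n : ℤ) (x : X) : List (Quotient (csetoid hu n)) :=
  ((cov N hN (prep hu n x) (rr (n-1))).image (Quotient.mk (csetoid hu n))).toList

lemma Tlist_congr {n : ℤ} {x y : X} (h : dist x y < rr (n-1)) :
    Tlist hu N hN n x = Tlist hu N hN n y := by
  unfold Tlist
  rw [prep_congr hu n h]

lemma mem_Tlist (n : ℤ) (x : X) :
    Quotient.mk (csetoid hu n) x ∈ Tlist hu N hN n x := by
  have hx : x ∈ Metric.ball (prep hu n x) (rr (n-1)) := by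
    rw [Metric.mem_ball]
    exact prep_dist hu n x
  have h := cov_sub N hN (prep hu n x) (rr (n-1)) hx
  simp only [Set.mem_iUnion] at h
  obtain ⟨c, hc, hxc⟩ := h
  rw [Metric.mem_ball, rr_half] at hxc
  have hq : Quotient.mk (csetoid hu n) x = Quotient.mk (csetoid hu n) c :=
    Quotient.sound (hxc : (csetoid hu n).r x c)
  rw [Tlist, Finset.mem_toList, hq]
  exact Finset.mem_image_of_mem _ hc

noncomputable def lab (n : ℤ) (x : X) : Fin (N+2) :=
  ⟨(Tlist hu N hN n x).idxOf (Quotient.mk (csetoid hu n) x) + 1, by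
    have h1 : (Tlist hu N hN n x).length ≤ N := by
      rw [Tlist, Finset.length_toList]
      exact le_trans Finset.card_image_le (cov_card N hN _ _)
    have h2 := List.idxOf_le_length (a := Quotient.mk (csetoid hu n) x)
      (l := Tlist hu N hN n x)
    omega⟩

lemma lab_ne_zero (n : ℤ) (x : X) : lab hu N hN n x ≠ 0 := by
  intro h
  rw [Fin.ext_iff] at h
  simp [lab] at h

lemma lab_eq_iff {n : ℤ} {x y : X} (h : dist x y < rr (n-1)) :
    lab hu N hN n x = lab hu N hN n y ↔ dist x y < rr n := by
  have hT : Tlist hu N hN n y = Tlist hu N hN n x :=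
    Tlist_congr hu N hN (by rwa [dist_comm] at h)
  have hmx := mem_Tlist hu N hN n x
  have hmy := mem_Tlist hu N hN n y
  rw [hT] at hmy
  rw [lab, lab]
  rw [Fin.mk.injEq, hT, Nat.add_right_cancel_iff,
    List.idxOf_inj hmx, Quotient.eq]
  exact Iff.rfl

end Aux

section Enc

variable {X : Type*} [MetricSpace X]
variable (hu : ∀ x y z : X, dist x y ≤ max (dist x z) (dist z y))
variable (N : ℕ) (hN : ∀ (x : X) (r : ℝ), ∃ s : Finset X, s.card ≤ N ∧
      Metric.ball x r ⊆ ⋃ c ∈ s, Metric.ball c (r / 2))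

noncomputable def aa (p x : X) : ℕ :=
  Nat.find (pow_unbounded_of_one_lt (dist x p) (by norm_num : (1:ℝ) < 2))

lemma aa_spec (p x : X) : dist x p < 2 ^ aa p x :=
  Nat.find_spec (pow_unbounded_of_one_lt (dist x p) (by norm_num : (1:ℝ) < 2))

lemma aa_min {p x : X} (h : 0 < aa p x) : (2:ℝ) ^ (aa p x - 1) ≤ dist x p := by
  have hlt : aa p x - 1 < aa p x := by omega
  exact le_of_not_gt (Nat.find_min (pow_unbounded_of_one_lt (dist x p)
    (by norm_num : (1:ℝ) < 2)) hlt)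

noncomputable def ffun (p x : X) : ℕ → Fin (N+2) := fun j =>
  if j < aa p x then 0 else lab hu N hN ((j:ℤ) - 2*(aa p x) + 1) x

lemma ffun_agree_o (p x : X) :
    agree (ffun hu N hN p x) (fun _ => (0 : Fin (N+2))) = aa p x := by
  apply agree_eq_of
  · intro j hj
    simp [ffun, hj]
  · simp only [ffun, lt_irrefl, if_false]
    exact lab_ne_zero hu N hN _ x

lemma ffun_ne_o (p x : X) : ffun hu N hN p x ≠ (fun _ => (0 : Fin (N+2))) := by
  intro h
  have := congrFun h (aa p x)
  simp only [ffun, lt_irrefl, if_false] at this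
  exact lab_ne_zero hu N hN _ x this

lemma dist_lt_pow_aa (p x : X) : dist x p < (2:ℝ) ^ ((aa p x : ℤ)) := by
  rw [zpow_natCast]; exact aa_spec p x

lemma key (p : X) {x y : X} (hxy : x ≠ y) (hab : aa p x ≤ aa p y) :
    ∃ t : ℤ, sigma (1/2) (fun _ => (0 : Fin (N+2))) (ffun hu N hN p x) (ffun hu N hN p y)
        = 2 ^ t ∧ dist x y < 2 ^ t ∧ (2:ℝ) ^ t ≤ 2 * dist x y := by
  have hd0 : 0 < dist x y := dist_pos.mpr hxy
  rcases eq_or_lt_of_le hab with hab' | hab'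
  · -- equal shells
    set a := aa p x with ha
    set e := Int.log 2 (dist x y) with he
    have he1 : (2:ℝ) ^ e ≤ dist x y := Int.zpow_log_le_self (by norm_num) hd0
    have he2 : dist x y < 2 ^ (e+1) := Int.lt_zpow_succ_log_self (by norm_num) _
    have hda : dist x y < (2:ℝ) ^ ((a : ℤ)) := by
      refine lt_of_le_of_lt (hu x y p) (max_lt (dist_lt_pow_aa p x) ?_)
      rw [dist_comm, hab']
      exact dist_lt_pow_aa p y
    have hea : e < (a : ℤ) :=
      (zpow_lt_zpow_iff_right₀ one_lt_two).mp (lt_of_le_of_lt he1 hda)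
    set N0 : ℕ := (2*(a:ℤ) - 1 - e).toNat with hN0def
    have hN0 : (N0 : ℤ) = 2*(a:ℤ) - 1 - e := Int.toNat_of_nonneg (by omega)
    have haN0 : a ≤ N0 := by omega
    -- distance below levels
    have hdlt : ∀ m : ℤ, m ≤ -1 - e → dist x y < rr m := by
      intro m hm
      refine lt_of_lt_of_le ?_ (rr_anti hm)
      rw [show (-1 - e : ℤ) = -(e+1) by ring, rr_eq]
      exact he2
    have hdis : ffun hu N hN p x N0 ≠ ffun hu N hN p y N0 := by
      have hb : ¬ N0 < aa p y := by omega
      simp +zetaDelta only [ffun, if_neg (by omega : ¬ N0 < aa p x), if_neg hb, ← hab']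
      intro h
      have h2 := (lab_eq_iff hu N hN (hdlt _ (by omega))).mp h
      rw [show ((N0:ℤ) - 2*(a:ℤ) + 1 : ℤ) = -e by omega, rr_eq] at h2
      exact absurd h2 (not_lt.mpr he1)
    have heqs : ∀ j < N0, ffun hu N hN p x j = ffun hu N hN p y j := by
      intro j hj
      by_cases hja : j < a
      · simp +zetaDelta [ffun, hja, ← hab']
      · push_neg at hja
        have hb : ¬ j < aa p y := by omega
        simp +zetaDelta only [ffun, if_neg (by omega : ¬ j < aa p x), if_neg hb, ← hab']
        refine (lab_eq_iff hu N hN ?_).mpr ?_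
        · exact hdlt _ (by omega)
        · exact hdlt _ (by omega)
    have hag : agree (ffun hu N hN p x) (ffun hu N hN p y) = N0 :=
      agree_eq_of heqs hdis
    have hne : ffun hu N hN p x ≠ ffun hu N hN p y := fun h => hdis (congrFun h N0)
    refine ⟨e + 1, ?_, he2, ?_⟩
    · rw [sigma, if_neg hne, hag, ffun_agree_o, ffun_agree_o, ← hab']
      rw [show ((N0:ℤ) - (a:ℤ) - (a:ℤ) : ℤ) = -(e+1) by omega]
      rw [one_div, inv_zpow, ← zpow_neg, neg_neg]
    · rw [zpow_add₀ (by norm_num : (2:ℝ) ≠ 0), zpow_one, mul_comm]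
      exact mul_le_mul_of_nonneg_left he1 (by norm_num)
  · -- different shells
    set a := aa p x with ha
    set b := aa p y with hb
    have hb1 : 0 < b := by omega
    have hyb : (2:ℝ) ^ ((b:ℤ) - 1) ≤ dist y p := by
      have := aa_min (p := p) (x := y) hb1
      rwa [show ((b:ℤ) - 1) = ((b - 1 : ℕ) : ℤ) by omega, zpow_natCast]
    have hxp : dist x p < (2:ℝ) ^ ((b:ℤ) - 1) := by
      refine lt_of_lt_of_le (dist_lt_pow_aa p x) ?_
      exact zpow_le_zpow_right₀ one_le_two (by omega)
    have hge : (2:ℝ) ^ ((b:ℤ) - 1) ≤ dist x y := by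
      have h1 := hu y p x
      rcases le_max_iff.mp h1 with h2 | h2
      · rw [dist_comm]; exact le_trans hyb h2
      · exact absurd (lt_of_le_of_lt (le_trans hyb h2) hxp) (lt_irrefl _)
    have hlt : dist x y < (2:ℝ) ^ ((b:ℤ)) := by
      refine lt_of_le_of_lt (hu x y p) (max_lt ?_ ?_)
      · exact lt_of_lt_of_le (dist_lt_pow_aa p x)
          (zpow_le_zpow_right₀ one_le_two (by omega))
      · rw [dist_comm]; exact dist_lt_pow_aa p y
    have hdis : ffun hu N hN p x a ≠ ffun hu N hN p y a := by
      simp +zetaDelta only [ffun, lt_irrefl, if_false, if_pos hab']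
      exact lab_ne_zero hu N hN _ x
    have heqs : ∀ j < a, ffun hu N hN p x j = ffun hu N hN p y j := by
      intro j hj
      simp +zetaDelta [ffun, hj, lt_trans hj hab']
    have hag : agree (ffun hu N hN p x) (ffun hu N hN p y) = a :=
      agree_eq_of heqs hdis
    have hne : ffun hu N hN p x ≠ ffun hu N hN p y := fun h => hdis (congrFun h a)
    refine ⟨b, ?_, hlt, ?_⟩
    · rw [sigma, if_neg hne, hag, ffun_agree_o, ffun_agree_o]
      rw [show ((a:ℤ) - (a:ℤ) - (b:ℤ) : ℤ) = -(b:ℤ) by ring]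
      rw [one_div, inv_zpow, ← zpow_neg, neg_neg]
    · rw [show ((b:ℤ)) = ((b:ℤ) - 1) + 1 by ring,
        zpow_add₀ (by norm_num : (2:ℝ) ≠ 0), zpow_one, mul_comm]
      exact mul_le_mul_of_nonneg_left hge (by norm_num)

end Enc

/-- Every unbounded, doubling, complete ultrametric space admits
a bilipschitz embedding into the symbolic `k`-Cantor set
`(F^∞ \ {o}, σ_λ)` for some `k`, `0 < λ < 1` and base point `o`. -/
theorem bilipschitz_embedding_cantor {X : Type*} [MetricSpace X] [CompleteSpace X]
    (hu : ∀ x y z : X, dist x y ≤ max (dist x z) (dist z y))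
    (hub : ∀ R : ℝ, ∃ x y : X, R < dist x y)
    (N : ℕ) (hN : ∀ (x : X) (r : ℝ), ∃ s : Finset X, s.card ≤ N ∧
      Metric.ball x r ⊆ ⋃ c ∈ s, Metric.ball c (r / 2)) :
    ∃ k : ℕ, 2 ≤ k ∧ ∃ lam : ℝ, 0 < lam ∧ lam < 1 ∧
      ∃ (o : ℕ → Fin k) (f : X → (ℕ → Fin k)) (L : ℝ), 1 ≤ L ∧
        (∀ x : X, f x ≠ o) ∧
        ∀ x y : X, dist x y / L ≤ sigma lam o (f x) (f y) ∧
          sigma lam o (f x) (f y) ≤ L * dist x y := by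
  obtain ⟨p, -, -⟩ := hub 0
  refine ⟨N + 2, by omega, 1/2, by norm_num, by norm_num,
    (fun _ => 0), ffun hu N hN p, 2, by norm_num, ffun_ne_o hu N hN p, ?_⟩
  intro x y
  by_cases hxy : x = y
  · subst hxy
    rw [sigma, if_pos rfl, dist_self]
    norm_num
  · have main : dist x y ≤ sigma (1/2) (fun _ => (0 : Fin (N+2)))
        (ffun hu N hN p x) (ffun hu N hN p y) ∧
        sigma (1/2) (fun _ => (0 : Fin (N+2)))
        (ffun hu N hN p x) (ffun hu N hN p y) ≤ 2 * dist x y := by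
      rcases le_total (aa p x) (aa p y) with hab | hab
      · obtain ⟨t, hs, h1, h2⟩ := key hu N hN p hxy hab
        rw [hs]
        exact ⟨le_of_lt h1, h2⟩
      · obtain ⟨t, hs, h1, h2⟩ := key hu N hN p (Ne.symm hxy) hab
        rw [sigma_comm, hs, dist_comm]
        exact ⟨le_of_lt h1, h2⟩
    constructor
    · refine le_trans ?_ main.1
      have := dist_nonneg (x := x) (y := y)
      linarith
    · exact main.2
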